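/- Let G be a simple graph containing two cycles with distinct edge sets, i.e., there exist vertices a, b and closed walks c₁ : G.Walk a a and c₂ : G.Walk b b, each of which is a cycle, such that the edge set of c₁ differs from the edge set of c₂. Then for every edge e of G, the graph G' obtained from G by deleting the edge e still contains a cycle; equivalently, G.deleteEdges {e} is not acyclic. -/

import Mathlib

open SimpleGraph Walk

/-- In a path starting at `u`, an edge incident to `u` must be the first edge. -/
lemma path_first_edge {V : Type*} {G : SimpleGraph V} {u v x : V}
    (p : G.Walk u x) (hp : p.IsPath) (he : s(u, v) ∈ p.edges) :
    ∃ (h : G.Adj u v) (r : G.Walk v x), p = Walk.cons h r := by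
  cases p with
  | nil => simp at he
  | cons h' r =>
    rename_i y
    rw [Walk.edges_cons, List.mem_cons] at he
    rcases he with he | he
    · rw [Sym2.eq_iff] at he
      rcases he with ⟨-, rfl⟩ | ⟨rfl, rfl⟩
      · exact ⟨h', r, rfl⟩
      · exact absurd rfl h'.ne
    · exfalso
      have hu : u ∈ r.support := Walk.fst_mem_support_of_mem_edges r he
      rw [Walk.cons_isPath_iff] at hp
      exact hp.2 hu

/-- A cycle containing the edge `s(u,v)` decomposes as that edge plus a path from `u` to `v`
avoiding the edge, up to edge sets. -/
lemma cycle_decomp {V : Type*} {G : SimpleGraph V} {a u v : V}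
    (c : G.Walk a a) (hc : c.IsCycle) (he : s(u, v) ∈ c.edges) :
    ∃ p : G.Walk u v, p.IsPath ∧ s(u, v) ∉ p.edges ∧
      ∀ f, f ∈ c.edges ↔ f = s(u, v) ∨ f ∈ p.edges := by
  classical
  have hu : u ∈ c.support := Walk.fst_mem_support_of_mem_edges c he
  have hrot : ∀ f, f ∈ (c.rotate u hu).edges ↔ f ∈ c.edges :=
    fun f => (Walk.rotate_edges c u hu).mem_iff
  have hc' : (c.rotate u hu).IsCycle := hc.rotate hu
  have he' : s(u, v) ∈ (c.rotate u hu).edges := (hrot _).2 he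
  revert hrot hc' he'
  generalize c.rotate u hu = c'
  intro hrot hc' he'
  cases c' with
  | nil => simp at he'
  | cons h q =>
    rename_i x
    rw [Walk.cons_isCycle_iff] at hc'
    obtain ⟨hq, hux⟩ := hc'
    rw [Walk.edges_cons, List.mem_cons] at he'
    rcases he' with he' | he'
    · -- first edge of the rotated cycle is s(u,v), so x = v
      have hxv : x = v := by
        rw [Sym2.eq_iff] at he'
        rcases he' with ⟨-, h1⟩ | ⟨h1, -⟩
        · exact h1.symm
        · exact absurd h1 h.ne
      subst hxv
      refine ⟨q.reverse, hq.reverse, by simpa using hux, fun f => ?_⟩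
      rw [← hrot f, Walk.edges_cons, List.mem_cons]
      simp [Sym2.eq_swap]
    · -- s(u,v) lies in q; use q.reverse which is a path from u
      have hqr : q.reverse.IsPath := hq.reverse
      have heqr : s(u, v) ∈ q.reverse.edges := by simpa using he'
      obtain ⟨h2, r, hr⟩ := path_first_edge q.reverse hqr heqr
      have hrpath : r.IsPath := by
        rw [hr, Walk.cons_isPath_iff] at hqr
        exact hqr.1
      have hur : u ∉ r.support := by
        rw [hr, Walk.cons_isPath_iff] at hqr
        exact hqr.2
      have hnodup : q.reverse.edges.Nodup := hqr.edges_nodup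
      have hnot_r : s(u, v) ∉ r.edges := by
        rw [hr, Walk.edges_cons] at hnodup
        exact (List.nodup_cons.1 hnodup).1
      have hne_first : s(u, v) ≠ s(u, x) := fun hf => hux (hf ▸ he')
      refine ⟨Walk.cons h r.reverse, ?_, ?_, fun f => ?_⟩
      · rw [Walk.cons_isPath_iff]
        exact ⟨hrpath.reverse, by simpa using hur⟩
      · rw [Walk.edges_cons, List.mem_cons]
        push_neg
        exact ⟨hne_first, by simpa using hnot_r⟩
      · have hqmem : ∀ g, g ∈ q.edges ↔ g = s(u, v) ∨ g ∈ r.edges := by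
          intro g
          have : g ∈ q.reverse.edges ↔ g ∈ (Walk.cons h2 r).edges := by rw [hr]
          simpa using this
        rw [← hrot f, Walk.edges_cons, List.mem_cons, hqmem f]
        simp only [Walk.edges_cons, Walk.edges_reverse, List.mem_cons, List.mem_reverse]
        tauto

theorem deleteEdge_not_acyclic_of_two_cycles {V : Type*} (G : SimpleGraph V)
    (htwo : ∃ (a b : V) (c₁ : G.Walk a a) (c₂ : G.Walk b b),
      c₁.IsCycle ∧ c₂.IsCycle ∧ {e | e ∈ c₁.edges} ≠ {e | e ∈ c₂.edges}) :
    ∀ e ∈ G.edgeSet, ¬ (G.deleteEdges {e}).IsAcyclic := by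
  obtain ⟨a, b, c₁, c₂, hc₁, hc₂, hne⟩ := htwo
  intro e
  induction e using Sym2.ind with
  | _ u v =>
    intro he hac
    -- each cycle must contain the edge, else it survives deletion
    have hmem : ∀ {w : V} (c : G.Walk w w), c.IsCycle → s(u, v) ∈ c.edges := by
      intro w c hc
      by_contra hno
      have hcond : ∀ f ∈ c.edges, f ∉ ({s(u, v)} : Set (Sym2 V)) := by
        intro f hf
        simp only [Set.mem_singleton_iff]
        rintro rfl
        exact hno hf
      exact hac (c.toDeleteEdges _ hcond) (IsCycle.toDeleteEdges G ({s(u, v)} : Set (Sym2 V)) hc hcond)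
    obtain ⟨p₁, hp₁, hnp₁, hchar₁⟩ := cycle_decomp c₁ hc₁ (hmem c₁ hc₁)
    obtain ⟨p₂, hp₂, hnp₂, hchar₂⟩ := cycle_decomp c₂ hc₂ (hmem c₂ hc₂)
    -- lift the two paths to the deleted graph; they are equal by acyclicity
    have hcond₁ : ∀ f ∈ p₁.edges, f ∉ ({s(u, v)} : Set (Sym2 V)) := by
      intro f hf hf2
      rw [Set.mem_singleton_iff] at hf2
      exact hnp₁ (hf2 ▸ hf)
    have hcond₂ : ∀ f ∈ p₂.edges, f ∉ ({s(u, v)} : Set (Sym2 V)) := by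
      intro f hf hf2
      rw [Set.mem_singleton_iff] at hf2
      exact hnp₂ (hf2 ▸ hf)
    have h₁ := IsPath.toDeleteEdges G ({s(u, v)} : Set (Sym2 V)) hp₁ hcond₁
    have h₂ := IsPath.toDeleteEdges G ({s(u, v)} : Set (Sym2 V)) hp₂ hcond₂
    have heq := hac.path_unique ⟨_, h₁⟩ ⟨_, h₂⟩
    rw [Subtype.mk.injEq] at heq
    have hedges : p₁.edges = p₂.edges := by
      have e1 := p₁.edges_transfer (by intro f hf; exact Walk.edges_subset_edgeSet p₁ hf)
      calc p₁.edges = (p₁.toDeleteEdges {s(u,v)} _).edges := (Walk.edges_transfer _ _).symm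
        _ = (p₂.toDeleteEdges {s(u,v)} _).edges := by rw [heq]
        _ = p₂.edges := Walk.edges_transfer _ _
    apply hne
    ext f
    simp only [Set.mem_setOf_eq, hchar₁ f, hchar₂ f, hedges]
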